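/- For the triple (2,5,7): the integer 43 satisfies d(43; 2,5,7) = 17 and every integer n > 43 has d(n; 2,5,7) ≠ 17, while the integer 42 satisfies d(42; 2,5,7) = 18 and every integer n > 42 has d(n; 2,5,7) ≠ 18. In particular, the largest integer with exactly 17 representations is strictly greater than the largest integer with exactly 18 representations. -/

import Mathlib

/-- The denumerant `d(n; a, b, c)`: the number of triples `(x, y, z)` of nonnegative
integers with `x*a + y*b + z*c = n`. -/
noncomputable def denum3 (a b c n : ℕ) : ℕ :=
  Nat.card {t : ℕ × ℕ × ℕ // t.1 * a + t.2.1 * b + t.2.2 * c = n}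

set_option maxRecDepth 100000

def dset (n : ℕ) : Finset (ℕ × ℕ × ℕ) :=
  (Finset.range (n/2+1) ×ˢ Finset.range (n/5+1) ×ˢ Finset.range (n/7+1)).filter
    (fun t => t.1 * 2 + t.2.1 * 5 + t.2.2 * 7 = n)

lemma denum3_eq (n : ℕ) : denum3 2 5 7 n = (dset n).card := by
  rw [denum3]
  rw [Nat.card_congr (Equiv.subtypeEquivRight (q := fun t => t ∈ dset n) ?_)]
  · rw [Nat.card_eq_fintype_card, Fintype.card_coe]
  · intro t
    simp only [dset, Finset.mem_filter, Finset.mem_product, Finset.mem_range]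
    constructor
    · intro h
      refine ⟨⟨?_, ?_, ?_⟩, h⟩ <;> omega
    · exact fun h => h.2

lemma denum3_mono (n : ℕ) : denum3 2 5 7 n ≤ denum3 2 5 7 (n+2) := by
  rw [denum3_eq, denum3_eq]
  apply Finset.card_le_card_of_injOn (fun t => (t.1 + 1, t.2))
  · intro t ht
    simp only [dset, Finset.mem_coe, Finset.mem_filter, Finset.mem_product, Finset.mem_range] at ht ⊢
    obtain ⟨⟨h1, h2, h3⟩, h⟩ := ht
    refine ⟨⟨?_, ?_, ?_⟩, ?_⟩ <;> omega
  · intro a _ b _ h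
    simp only [Prod.mk.injEq] at h
    exact Prod.ext (by omega) h.2

lemma denum3_ge (n : ℕ) (h : 44 ≤ n) : 19 ≤ denum3 2 5 7 n := by
  obtain ⟨m, rfl⟩ : ∃ m, n = 44 + m := ⟨n - 44, by omega⟩
  clear h
  induction m using Nat.strong_induction_on with
  | _ m ih =>
    match m with
    | 0 => rw [denum3_eq]; decide
    | 1 => rw [denum3_eq]; decide
    | (k+2) =>
      calc (19 : ℕ) ≤ denum3 2 5 7 (44 + k) := ih k (by omega)
        _ ≤ denum3 2 5 7 (44 + (k+2)) := by
            have e : 44 + (k+2) = (44+k)+2 := by omega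
            rw [e]; exact denum3_mono (44 + k)

/-- For the triple `(2,5,7)`: `43` has exactly `17` representations and is the largest
such integer, `42` has exactly `18` representations and is the largest such integer;
in particular the largest integer with exactly `17` representations is strictly greater
than the largest integer with exactly `18` representations. -/
theorem denumerant_257_g17_gt_g18 :
    denum3 2 5 7 43 = 17 ∧ (∀ n : ℕ, 43 < n → denum3 2 5 7 n ≠ 17) ∧
    denum3 2 5 7 42 = 18 ∧ (∀ n : ℕ, 42 < n → denum3 2 5 7 n ≠ 18) ∧
    42 < 43 := by
  have h43 : denum3 2 5 7 43 = 17 := by rw [denum3_eq]; decide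
  refine ⟨h43, ?_, ?_, ?_, by norm_num⟩
  · intro n hn
    have := denum3_ge n (by omega); omega
  · rw [denum3_eq]; decide
  · intro n hn
    rcases eq_or_lt_of_le (show 43 ≤ n from hn) with h | h
    · rw [← h, h43]; omega
    · have := denum3_ge n (by omega); omega
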